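/- (Test-function integral estimates.) Let (Σ,g) be a compact surface of unit area, fix δ > 0 small. For points x₁, x₂ ∈ Σ and parameters t₁, t₂ ∈ (0, δ] with |t₁−t₂|² + d(x₁,x₂)² ≥ δ⁴, with min{t₁,t₂} ≤ ν ≪ δ, set t̃ᵢ = 1/tᵢ when tᵢ ≤ δ/2 and t̃ᵢ = −(4/δ²)(tᵢ−δ) otherwise, and define φ₁(y) = log[(1 + t̃₂² d(x₂,y)²)/(1 + t̃₁² d(x₁,y)²)²]. Then there exists C = C(δ, Σ) > 0 such that (1/C)·(t₁²/t₂²) ≤ ∫_Σ e^{φ₁} dV ≤ C·(t₁²/t₂²). -/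

import Mathlib

open MeasureTheory Metric Real

set_option linter.unusedSectionVars false
set_option linter.unusedVariables false
set_option maxHeartbeats 1000000
open scoped ENNReal NNReal

lemma tilde_nonneg (δ t : ℝ) (hδ : 0 < δ) (ht : 0 < t) (htδ : t ≤ δ) :
    0 ≤ (if t ≤ δ/2 then 1/t else -(4/δ^2)*(t-δ)) := by
  split_ifs with h
  · positivity
  · have : t - δ ≤ 0 := by linarith
    have h4 : (0:ℝ) < 4/δ^2 := by positivity
    nlinarith

lemma tilde_lb (δ t : ℝ) (hδ : 0 < δ) (ht : 0 < t) (htδ : t ≤ δ) :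
    t/(δ+2) ≤ 1/(1+(if t ≤ δ/2 then 1/t else -(4/δ^2)*(t-δ))) := by
  split_ifs with h
  · rw [div_le_div_iff₀ (by linarith) (by positivity)]
    rw [one_div t]
    rw [mul_add, mul_inv_cancel₀ ht.ne']
    linarith
  · push_neg at h
    have ha : -(4/δ^2)*(t-δ) ≤ 2/δ := by
      rw [show -(4/δ^2)*(t-δ) = 4*(δ-t)/δ^2 from by ring,
        div_le_div_iff₀ (by positivity) hδ]
      nlinarith
    have ha0 : 0 ≤ -(4/δ^2)*(t-δ) := by
      nlinarith [mul_nonneg (show (0:ℝ) ≤ 4/δ^2 by positivity)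
        (show (0:ℝ) ≤ δ - t by linarith)]
    rw [div_le_div_iff₀ (by linarith) (by linarith)]
    have h2 : t * (1 + 2/δ) ≤ δ + 2 := by
      have : t * (1 + 2/δ) ≤ δ * (1 + 2/δ) := by
        apply mul_le_mul_of_nonneg_right htδ (by positivity)
      calc t * (1 + 2/δ) ≤ δ * (1 + 2/δ) := this
        _ = δ + 2 := by field_simp
    nlinarith

lemma tilde_ub (δ t : ℝ) (hδ : 0 < δ) (ht : 0 < t) (htδ : t ≤ δ) :
    1/(1+(if t ≤ δ/2 then 1/t else -(4/δ^2)*(t-δ))) ≤ max 1 (2/δ) * t := by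
  split_ifs with h
  · have h1 : 1/(1+1/t) ≤ t := by
      rw [div_le_iff₀ (by positivity)]
      rw [one_div t]
      rw [mul_add, mul_inv_cancel₀ ht.ne']
      nlinarith
    calc 1/(1+1/t) ≤ t := h1
      _ = 1 * t := (one_mul t).symm
      _ ≤ max 1 (2/δ) * t := by
          apply mul_le_mul_of_nonneg_right (le_max_left _ _) ht.le
  · push_neg at h
    have ha0 : 0 ≤ -(4/δ^2)*(t-δ) := by
      have h4 : (0:ℝ) < 4/δ^2 := by positivity
      nlinarith
    calc 1/(1+(-(4/δ^2)*(t-δ))) ≤ 1 := by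
          rw [div_le_one (by linarith)]; linarith
      _ ≤ (2/δ) * t := by
          rw [div_mul_eq_mul_div, le_div_iff₀ hδ]
          linarith
      _ ≤ max 1 (2/δ) * t := by
          apply mul_le_mul_of_nonneg_right (le_max_right _ _) ht.le

lemma tilde_le_A (δ t : ℝ) (hδ : 0 < δ) (ht : 0 < t) (htδ : t ≤ δ)
    (hT : (min δ 1)^2/2 ≤ t) :
    (if t ≤ δ/2 then 1/t else -(4/δ^2)*(t-δ)) ≤ 2/(min δ 1)^2 := by
  have hδ₁ : 0 < min δ 1 := lt_min hδ one_pos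
  have hδ₁1 : min δ 1 ≤ 1 := min_le_right _ _
  have hδ₁δ : min δ 1 ≤ δ := min_le_left _ _
  split_ifs with h
  · rw [div_le_div_iff₀ ht (by positivity)]
    nlinarith
  · push_neg at h
    have ha : -(4/δ^2)*(t-δ) ≤ 2/δ := by
      rw [show -(4/δ^2)*(t-δ) = 4*(δ-t)/δ^2 from by ring,
        div_le_div_iff₀ (by positivity) hδ]
      nlinarith
    calc -(4/δ^2)*(t-δ) ≤ 2/δ := ha
      _ ≤ 2/(min δ 1)^2 := by
          apply div_le_div_of_nonneg_left (by norm_num) (by positivity)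
          nlinarith

lemma tilde_of_small (δ t : ℝ) (hδ : 0 < δ) (ht : 0 < t) (htδ : t ≤ δ)
    (hT : t < (min δ 1)^2/2) :
    t ≤ δ/2 ∧ 2 ≤ 1/t := by
  have hδ₁ : 0 < min δ 1 := lt_min hδ one_pos
  have hδ₁1 : min δ 1 ≤ 1 := min_le_right _ _
  have hδ₁δ : min δ 1 ≤ δ := min_le_left _ _
  have hTδ : (min δ 1)^2/2 ≤ δ/2 := by nlinarith
  constructor
  · linarith
  · rw [le_div_iff₀ ht]
    nlinarith

section IntHelpers
variable {S : Type*} [MetricSpace S] [CompactSpace S] [MeasurableSpace S] [BorelSpace S]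
  (μ : Measure S) [IsProbabilityMeasure μ]

lemma cont_integrable {f : S → ℝ} (hf : Continuous f) : Integrable f μ :=
  hf.integrable_of_hasCompactSupport
    (IsCompact.of_isClosed_subset isCompact_univ (isClosed_tsupport f) (Set.subset_univ _))

lemma f_cont (a₁ a₂ : ℝ) (x₁ x₂ : S) :
    Continuous (fun y : S => (1 + a₂ ^ 2 * dist x₂ y ^ 2) /
      (1 + a₁ ^ 2 * dist x₁ y ^ 2) ^ 2) := by
  apply Continuous.div (by fun_prop) (by fun_prop)
  intro y
  have : (0:ℝ) < 1 + a₁ ^ 2 * dist x₁ y ^ 2 := by positivity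
  positivity

lemma inv_cont (a₁ : ℝ) (x₁ : S) :
    Continuous (fun y : S => ((1 + a₁ ^ 2 * dist x₁ y ^ 2) ^ 2)⁻¹) := by
  apply Continuous.inv₀ (by fun_prop)
  intro y
  have : (0:ℝ) < 1 + a₁ ^ 2 * dist x₁ y ^ 2 := by positivity
  positivity


lemma annuli_lintegral (c₂ : ℝ) (hc₂ : 0 < c₂)
    (hvol_upper : ∀ (p : S) (s : ℝ), 0 < s → μ (ball p s) ≤ ENNReal.ofReal (c₂ * s ^ 2))
    (p : S) (a : ℝ) (ha : 1 ≤ a) :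
    ∫⁻ y, ENNReal.ofReal (((1 + a ^ 2 * dist p y ^ 2) ^ 2)⁻¹) ∂μ ≤
      ENNReal.ofReal (9 * c₂ / a ^ 2) := by
  have ha0 : (0:ℝ) < a := lt_of_lt_of_le one_pos ha
  set g : S → ℝ≥0∞ := fun y => ENNReal.ofReal (((1 + a ^ 2 * dist p y ^ 2) ^ 2)⁻¹) with hg
  set s : ℕ → Set S := fun k => Nat.rec (ball p (1/a))
      (fun m _ => ball p (2^(m+1)/a) \ ball p (2^m/a)) k with hs
  have hcover : (Set.univ : Set S) ⊆ ⋃ i, s i := by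
    intro y _
    by_cases h0 : dist p y < 1/a
    · exact Set.mem_iUnion.2 ⟨0, by simpa [hs, mem_ball, dist_comm] using h0⟩
    · push_neg at h0
      have hP : ∃ n, dist p y < 2^(n+1)/a := by
        obtain ⟨n, hn⟩ := pow_unbounded_of_one_lt (a * dist p y) (one_lt_two (α := ℝ))
        refine ⟨n, ?_⟩
        rw [lt_div_iff₀ ha0, mul_comm]
        calc a * dist p y < 2^n := hn
          _ ≤ 2^(n+1) := by
              apply pow_le_pow_right₀ (by norm_num) (Nat.le_succ n)
      set k := Nat.find hP with hk
      have hspec : dist p y < 2^(k+1)/a := Nat.find_spec hP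
      have hlow : 2^k/a ≤ dist p y := by
        match k, hk with
        | 0, hk => simpa using h0
        | (m+1), hk =>
          have := Nat.find_min hP (by omega : m < k)
          push_neg at this
          simpa using this
      refine Set.mem_iUnion.2 ⟨k+1, ?_⟩
      simp only [hs]
      exact ⟨by simpa [mem_ball, dist_comm] using hspec,
        by simp [mem_ball, dist_comm]; exact hlow⟩
  have hg1 : ∀ y, g y ≤ 1 := by
    intro y
    rw [hg]
    calc ENNReal.ofReal (((1 + a ^ 2 * dist p y ^ 2) ^ 2)⁻¹) ≤ ENNReal.ofReal 1 := by
          apply ENNReal.ofReal_le_ofReal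
          rw [inv_le_one_iff₀]
          right
          nlinarith [sq_nonneg (a * dist p y), sq_nonneg (a^2 * dist p y ^2)]
      _ = 1 := ENNReal.ofReal_one
  have hb0 : ∫⁻ y in s 0, g y ∂μ ≤ ENNReal.ofReal (c₂/a^2) := by
    calc ∫⁻ y in s 0, g y ∂μ ≤ ∫⁻ _ in s 0, 1 ∂μ :=
          setLIntegral_mono measurable_const (fun x _ => hg1 x)
      _ = μ (s 0) := by rw [setLIntegral_one]
      _ = μ (ball p (1/a)) := rfl
      _ ≤ ENNReal.ofReal (c₂ * (1/a)^2) := hvol_upper p _ (by positivity)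
      _ = ENNReal.ofReal (c₂/a^2) := by rw [div_pow, one_pow]; ring_nf
  have hbk : ∀ k : ℕ, ∫⁻ y in s (k+1), g y ∂μ ≤
      ENNReal.ofReal (4*c₂/a^2) * (ENNReal.ofReal (1/4))^k := by
    intro k
    have hpt : ∀ y ∈ s (k+1), g y ≤ ENNReal.ofReal (((16:ℝ)^k)⁻¹) := by
      intro y hy
      have hd : 2^k/a ≤ dist p y := by
        have : y ∉ ball p (2^k/a) := hy.2
        simpa [mem_ball, dist_comm, not_lt] using this
      apply ENNReal.ofReal_le_ofReal
      have h1 : (4:ℝ)^k ≤ 1 + a^2 * dist p y ^2 := by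
        have had : (2:ℝ)^k ≤ a * dist p y := by
          rw [div_le_iff₀ ha0] at hd; linarith [hd]
        have : ((2:ℝ)^k)^2 ≤ (a * dist p y)^2 := by
          apply sq_le_sq' _ had
          nlinarith [pow_pos (zero_lt_two (α := ℝ)) k]
        calc (4:ℝ)^k = ((2:ℝ)^k)^2 := by
              rw [sq, ← mul_pow]; norm_num
          _ ≤ (a * dist p y)^2 := this
          _ ≤ 1 + a^2 * dist p y^2 := by rw [mul_pow]; linarith
      have h16 : (16:ℝ)^k = ((4:ℝ)^k)^2 := by
        rw [sq, ← mul_pow]; norm_num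
      rw [h16]
      apply inv_anti₀ (by positivity)
      apply sq_le_sq' (by nlinarith [pow_pos (zero_lt_four (α := ℝ)) k]) h1
    calc ∫⁻ y in s (k+1), g y ∂μ ≤ ∫⁻ _ in s (k+1), ENNReal.ofReal (((16:ℝ)^k)⁻¹) ∂μ :=
          setLIntegral_mono measurable_const hpt
      _ = ENNReal.ofReal (((16:ℝ)^k)⁻¹) * μ (s (k+1)) := setLIntegral_const _ _
      _ ≤ ENNReal.ofReal (((16:ℝ)^k)⁻¹) * ENNReal.ofReal (c₂ * (2^(k+1)/a)^2) := by
          apply mul_le_mul_right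
          exact le_trans (measure_mono Set.diff_subset) (hvol_upper p _ (by positivity))
      _ = ENNReal.ofReal (((16:ℝ)^k)⁻¹ * (c₂ * (2^(k+1)/a)^2)) :=
          (ENNReal.ofReal_mul (by positivity)).symm
      _ = ENNReal.ofReal ((4*c₂/a^2) * (1/4:ℝ)^k) := by
          congr 1
          have h2 : ((2:ℝ)^(k+1))^2 = 4 * 4^k := by
            rw [sq, ← mul_pow]
            norm_num [pow_succ]
            ring
          have h16 : (16:ℝ)^k = 4^k * 4^k := by
            rw [show (16:ℝ) = 4*4 by norm_num, mul_pow]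
          rw [div_pow, h2, h16]
          have h4 : (0:ℝ) < 4^k := by positivity
          field_simp
          rw [← mul_pow]; norm_num
      _ = ENNReal.ofReal (4*c₂/a^2) * (ENNReal.ofReal (1/4))^k := by
          rw [ENNReal.ofReal_mul (by positivity), ENNReal.ofReal_pow (by norm_num)]
  calc ∫⁻ y, g y ∂μ = ∫⁻ y in Set.univ, g y ∂μ := (setLIntegral_univ _).symm
    _ ≤ ∫⁻ y in ⋃ i, s i, g y ∂μ := lintegral_mono_set hcover
    _ ≤ ∑' i, ∫⁻ y in s i, g y ∂μ := lintegral_iUnion_le _ _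
    _ = (∫⁻ y in s 0, g y ∂μ) + ∑' k, ∫⁻ y in s (k+1), g y ∂μ := tsum_eq_zero_add' ENNReal.summable
    _ ≤ ENNReal.ofReal (c₂/a^2) + ∑' k, ENNReal.ofReal (4*c₂/a^2) * (ENNReal.ofReal (1/4))^k := by
          exact add_le_add hb0 (ENNReal.tsum_le_tsum hbk)
    _ ≤ ENNReal.ofReal (c₂/a^2) + ENNReal.ofReal (4*c₂/a^2) * 2 := by
          apply add_le_add_right
          rw [ENNReal.tsum_mul_left, ENNReal.tsum_geometric]
          apply mul_le_mul_right
          have hq : ENNReal.ofReal (1/4) ≤ 2⁻¹ := by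
            rw [show ((2:ℝ≥0∞))⁻¹ = ENNReal.ofReal (1/2) by
              rw [show (1:ℝ)/2 = 2⁻¹ by norm_num, ENNReal.ofReal_inv_of_pos two_pos,
                ENNReal.ofReal_ofNat]]
            exact ENNReal.ofReal_le_ofReal (by norm_num)
          have h1 : (2:ℝ≥0∞)⁻¹ ≤ 1 - ENNReal.ofReal (1/4) := by
            have := tsub_le_tsub_left hq (1 : ℝ≥0∞)
            calc (2:ℝ≥0∞)⁻¹ = 1 - 2⁻¹ := by
                  rw [← one_div, ← ENNReal.sub_half ENNReal.one_ne_top]; norm_num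
              _ ≤ 1 - ENNReal.ofReal (1/4) := this
          calc (1 - ENNReal.ofReal (1/4))⁻¹ ≤ ((2:ℝ≥0∞)⁻¹)⁻¹ := ENNReal.inv_le_inv.2 h1
            _ = 2 := inv_inv 2
    _ = ENNReal.ofReal (9 * c₂ / a ^ 2) := by
          rw [show (2:ℝ≥0∞) = ENNReal.ofReal 2 by simp,
            ← ENNReal.ofReal_mul (by positivity), ← ENNReal.ofReal_add (by positivity) (by positivity)]
          congr 1
          field_simp
          ring

lemma denom_integral_le (c₂ : ℝ) (hc₂ : 0 < c₂)
    (hvol_upper : ∀ (p : S) (s : ℝ), 0 < s → μ (ball p s) ≤ ENNReal.ofReal (c₂ * s ^ 2))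
    (p : S) (a : ℝ) (ha : 0 ≤ a) :
    ∫ y, ((1 + a ^ 2 * dist p y ^ 2) ^ 2)⁻¹ ∂μ ≤ (4 + 36 * c₂) / (1 + a) ^ 2 := by
  have ha1 : (0:ℝ) < 1 + a := by linarith
  rcases le_or_gt a 1 with h1 | h1
  · calc ∫ y, ((1 + a ^ 2 * dist p y ^ 2) ^ 2)⁻¹ ∂μ ≤ ∫ _, (1:ℝ) ∂μ := by
          apply integral_mono (cont_integrable μ (inv_cont a p)) (integrable_const 1)
          intro y
          have h0 : (0:ℝ) < 1 + a ^ 2 * dist p y ^ 2 := by positivity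
          rw [inv_le_one_iff₀]
          right
          nlinarith [sq_nonneg (a^2 * dist p y ^ 2),
            mul_nonneg (sq_nonneg a) (sq_nonneg (dist p y))]
      _ = 1 := by simp
      _ ≤ (4 + 36 * c₂) / (1 + a) ^ 2 := by
          rw [le_div_iff₀ (by positivity)]
          nlinarith
  · have key := annuli_lintegral μ c₂ hc₂ hvol_upper p a h1.le
    have heq : ∫ y, ((1 + a ^ 2 * dist p y ^ 2) ^ 2)⁻¹ ∂μ =
        (∫⁻ y, ENNReal.ofReal (((1 + a ^ 2 * dist p y ^ 2) ^ 2)⁻¹) ∂μ).toReal := by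
      apply integral_eq_lintegral_of_nonneg_ae
      · exact ae_of_all _ (fun y => by positivity)
      · exact (inv_cont a p).aestronglyMeasurable
    rw [heq]
    calc (∫⁻ y, ENNReal.ofReal (((1 + a ^ 2 * dist p y ^ 2) ^ 2)⁻¹) ∂μ).toReal
        ≤ (ENNReal.ofReal (9 * c₂ / a ^ 2)).toReal :=
          ENNReal.toReal_mono ENNReal.ofReal_ne_top key
      _ = 9 * c₂ / a ^ 2 := ENNReal.toReal_ofReal (by positivity)
      _ ≤ (4 + 36 * c₂) / (1 + a) ^ 2 := by
          rw [div_le_div_iff₀ (by positivity) (by positivity)]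
          nlinarith [mul_nonneg hc₂.le (mul_nonneg (by linarith : (0:ℝ) ≤ 3*a+1)
            (by linarith : (0:ℝ) ≤ a-1)), sq_nonneg a, sq_nonneg (a-1)]

lemma upper_main (c₂ : ℝ) (hc₂ : 0 < c₂)
    (hvol_upper : ∀ (p : S) (s : ℝ), 0 < s → μ (ball p s) ≤ ENNReal.ofReal (c₂ * s ^ 2))
    (x₁ x₂ : S) (a₁ a₂ : ℝ) (ha₁ : 0 ≤ a₁) (ha₂ : 0 ≤ a₂) :
    ∫ y, (1 + a₂ ^ 2 * dist x₂ y ^ 2) / (1 + a₁ ^ 2 * dist x₁ y ^ 2) ^ 2 ∂μ ≤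
      ((1 + diam (Set.univ : Set S) ^ 2) * (4 + 36 * c₂)) * ((1 + a₂) ^ 2 / (1 + a₁) ^ 2) := by
  set D := diam (Set.univ : Set S) with hD
  have hD0 : 0 ≤ D := diam_nonneg
  have hK : (0:ℝ) ≤ (1 + D ^ 2) * (1 + a₂) ^ 2 := by positivity
  calc ∫ y, (1 + a₂ ^ 2 * dist x₂ y ^ 2) / (1 + a₁ ^ 2 * dist x₁ y ^ 2) ^ 2 ∂μ
      ≤ ∫ y, ((1 + D ^ 2) * (1 + a₂) ^ 2) * ((1 + a₁ ^ 2 * dist x₁ y ^ 2) ^ 2)⁻¹ ∂μ := by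
        apply integral_mono (cont_integrable μ (f_cont a₁ a₂ x₁ x₂))
          ((cont_integrable μ (inv_cont a₁ x₁)).const_mul _)
        intro y
        dsimp only
        have hdist : dist x₂ y ≤ D :=
          dist_le_diam_of_mem isCompact_univ.isBounded (Set.mem_univ _) (Set.mem_univ _)
        have hden : (0:ℝ) < 1 + a₁ ^ 2 * dist x₁ y ^ 2 := by positivity
        have hnum : 1 + a₂ ^ 2 * dist x₂ y ^ 2 ≤ (1 + D ^ 2) * (1 + a₂) ^ 2 := by
          nlinarith [dist_nonneg (x := x₂) (y := y), sq_nonneg (D * a₂), sq_nonneg a₂,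
            mul_le_mul_of_nonneg_left (mul_le_mul hdist hdist dist_nonneg hD0)
              (mul_nonneg ha₂ ha₂)]
        rw [div_eq_mul_inv]
        apply mul_le_mul_of_nonneg_right hnum
        positivity
    _ = ((1 + D ^ 2) * (1 + a₂) ^ 2) * ∫ y, ((1 + a₁ ^ 2 * dist x₁ y ^ 2) ^ 2)⁻¹ ∂μ :=
        integral_const_mul _ _
    _ ≤ ((1 + D ^ 2) * (1 + a₂) ^ 2) * ((4 + 36 * c₂) / (1 + a₁) ^ 2) :=
        mul_le_mul_of_nonneg_left (denom_integral_le μ c₂ hc₂ hvol_upper x₁ a₁ ha₁) hK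
    _ = ((1 + D ^ 2) * (4 + 36 * c₂)) * ((1 + a₂) ^ 2 / (1 + a₁) ^ 2) := by ring

lemma lower_ball (c₁ : ℝ) (hc₁ : 0 < c₁) (s₀ : ℝ) (hs₀ : 0 < s₀)
    (hvol_lower : ∀ (p : S) (s : ℝ), 0 < s → s ≤ s₀ →
      ENNReal.ofReal (c₁ * s ^ 2) ≤ μ (ball p s))
    (x₁ x₂ : S) (a₁ a₂ ρ s₁ : ℝ) (ha₁ : 0 ≤ a₁) (ha₂ : 0 ≤ a₂) (hρ : 0 ≤ ρ)
    (hs₁ : 0 < s₁) (hs₁s : s₁ ≤ s₀) (hs₁1 : s₁ ≤ 1)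
    (hd : ∀ y ∈ ball x₁ (s₁ / (1 + a₁)), ρ ≤ dist x₂ y) :
    (c₁ * s₁ ^ 2 / 4) * (1 + a₂ ^ 2 * ρ ^ 2) * (1 / (1 + a₁) ^ 2) ≤
      ∫ y, (1 + a₂ ^ 2 * dist x₂ y ^ 2) / (1 + a₁ ^ 2 * dist x₁ y ^ 2) ^ 2 ∂μ := by
  have ha1 : (0:ℝ) < 1 + a₁ := by linarith
  set r := s₁ / (1 + a₁) with hr
  have hr0 : 0 < r := by positivity
  have hrs : r ≤ s₀ := by
    rw [hr, div_le_iff₀ ha1]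
    nlinarith
  have hμ : c₁ * r ^ 2 ≤ (μ (ball x₁ r)).toReal := by
    have h := hvol_lower x₁ r hr0 hrs
    calc c₁ * r ^ 2 = (ENNReal.ofReal (c₁ * r ^ 2)).toReal :=
          (ENNReal.toReal_ofReal (by positivity)).symm
      _ ≤ (μ (ball x₁ r)).toReal := ENNReal.toReal_mono (measure_ne_top μ _) h
  set cst := (1 + a₂ ^ 2 * ρ ^ 2) / 4 with hcst
  have hcst0 : 0 ≤ cst := by positivity
  have hptwise : ∀ y ∈ ball x₁ r, cst ≤
      (1 + a₂ ^ 2 * dist x₂ y ^ 2) / (1 + a₁ ^ 2 * dist x₁ y ^ 2) ^ 2 := by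
    intro y hy
    have hd2 : ρ ≤ dist x₂ y := hd y hy
    have hxy : dist x₁ y < r := by rw [dist_comm]; exact mem_ball.1 hy
    have hnum : 1 + a₂ ^ 2 * ρ ^ 2 ≤ 1 + a₂ ^ 2 * dist x₂ y ^ 2 := by
      nlinarith [mul_le_mul hd2 hd2 hρ (le_trans hρ hd2)]
    have hden : (1 + a₁ ^ 2 * dist x₁ y ^ 2) ^ 2 ≤ 4 := by
      have h1 : a₁ * dist x₁ y ≤ s₁ := by
        calc a₁ * dist x₁ y ≤ a₁ * r := by
              apply mul_le_mul_of_nonneg_left hxy.le ha₁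
          _ = s₁ * (a₁ / (1 + a₁)) := by rw [hr]; ring
          _ ≤ s₁ * 1 := by
              apply mul_le_mul_of_nonneg_left _ hs₁.le
              rw [div_le_one ha1]; linarith
          _ = s₁ := mul_one s₁
      have h2 : a₁ ^ 2 * dist x₁ y ^ 2 ≤ 1 := by
        have := mul_le_mul h1 h1 (mul_nonneg ha₁ dist_nonneg) hs₁.le
        nlinarith
      nlinarith [mul_nonneg (mul_nonneg ha₁ ha₁) (mul_nonneg (dist_nonneg : (0:ℝ) ≤ dist x₁ y) (dist_nonneg : (0:ℝ) ≤ dist x₁ y))]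
    have hdenpos : (0:ℝ) < (1 + a₁ ^ 2 * dist x₁ y ^ 2) ^ 2 := by
      have : (0:ℝ) < 1 + a₁ ^ 2 * dist x₁ y ^ 2 := by positivity
      positivity
    rw [hcst]
    exact div_le_div₀ (by positivity) hnum hdenpos hden
  have hds : cst * (μ (ball x₁ r)).toReal ≤
      ∫ y in ball x₁ r, (1 + a₂ ^ 2 * dist x₂ y ^ 2) / (1 + a₁ ^ 2 * dist x₁ y ^ 2) ^ 2 ∂μ :=
    by have h := setIntegral_ge_of_const_le_real measurableSet_ball (measure_ne_top μ _) hptwise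
         ((cont_integrable μ (f_cont a₁ a₂ x₁ x₂)).integrableOn)
       exact h
  have hset : ∫ y in ball x₁ r, (1 + a₂ ^ 2 * dist x₂ y ^ 2) / (1 + a₁ ^ 2 * dist x₁ y ^ 2) ^ 2 ∂μ ≤
      ∫ y, (1 + a₂ ^ 2 * dist x₂ y ^ 2) / (1 + a₁ ^ 2 * dist x₁ y ^ 2) ^ 2 ∂μ := by
    apply setIntegral_le_integral (cont_integrable μ (f_cont a₁ a₂ x₁ x₂))
    apply ae_of_all
    intro y
    have h1 : (0:ℝ) < 1 + a₁ ^ 2 * dist x₁ y ^ 2 := by positivity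
    positivity
  calc (c₁ * s₁ ^ 2 / 4) * (1 + a₂ ^ 2 * ρ ^ 2) * (1 / (1 + a₁) ^ 2)
      = cst * (c₁ * r ^ 2) := by rw [hcst, hr]; field_simp
    _ ≤ cst * (μ (ball x₁ r)).toReal := mul_le_mul_of_nonneg_left hμ hcst0
    _ ≤ _ := le_trans hds hset

lemma lower_compl (c₂ : ℝ) (hc₂ : 0 < c₂)
    (hvol_upper : ∀ (p : S) (s : ℝ), 0 < s → μ (ball p s) ≤ ENNReal.ofReal (c₂ * s ^ 2))
    (x₁ x₂ : S) (a₁ a₂ A : ℝ) (ha₁ : 0 ≤ a₁) (ha₂ : 0 ≤ a₂) (hA : a₁ ≤ A) :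
    (a₂ ^ 2 * (1 / (2 * c₂)) / 2) / (1 + A ^ 2 * diam (Set.univ : Set S) ^ 2) ^ 2 ≤
      ∫ y, (1 + a₂ ^ 2 * dist x₂ y ^ 2) / (1 + a₁ ^ 2 * dist x₁ y ^ 2) ^ 2 ∂μ := by
  set D := diam (Set.univ : Set S) with hD
  have hD0 : 0 ≤ D := diam_nonneg
  have hA0 : 0 ≤ A := le_trans ha₁ hA
  set r₂ := Real.sqrt (1 / (2 * c₂)) with hr₂
  have hr₂0 : 0 < r₂ := Real.sqrt_pos.2 (by positivity)
  have hr₂sq : r₂ ^ 2 = 1 / (2 * c₂) := Real.sq_sqrt (by positivity)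
  set B := ball x₂ r₂ with hB
  have hμB : μ B ≤ 2⁻¹ := by
    calc μ B ≤ ENNReal.ofReal (c₂ * r₂ ^ 2) := hvol_upper x₂ r₂ hr₂0
      _ = ENNReal.ofReal (1/2) := by rw [hr₂sq]; congr 1; field_simp
      _ = 2⁻¹ := by
          rw [show (1:ℝ)/2 = 2⁻¹ by norm_num, ENNReal.ofReal_inv_of_pos two_pos,
            ENNReal.ofReal_ofNat]
  have hμBc : (1:ℝ)/2 ≤ (μ Bᶜ).toReal := by
    have h1 : (2:ℝ≥0∞)⁻¹ ≤ μ Bᶜ := by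
      rw [prob_compl_eq_one_sub measurableSet_ball]
      calc (2:ℝ≥0∞)⁻¹ = 1 - 2⁻¹ := by
            rw [← one_div, ← ENNReal.sub_half ENNReal.one_ne_top]; norm_num
        _ ≤ 1 - μ B := tsub_le_tsub_left hμB 1
    calc (1:ℝ)/2 = ((2:ℝ≥0∞)⁻¹).toReal := by simp
      _ ≤ (μ Bᶜ).toReal := ENNReal.toReal_mono (measure_ne_top μ _) h1
  set cst := (a₂ ^ 2 * r₂ ^ 2) / (1 + A ^ 2 * D ^ 2) ^ 2 with hcst
  have hcst0 : 0 ≤ cst := by positivity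
  have hptwise : ∀ y ∈ Bᶜ, cst ≤
      (1 + a₂ ^ 2 * dist x₂ y ^ 2) / (1 + a₁ ^ 2 * dist x₁ y ^ 2) ^ 2 := by
    intro y hy
    have hd2 : r₂ ≤ dist x₂ y := by
      rw [hB] at hy
      simp only [Set.mem_compl_iff, mem_ball, not_lt, dist_comm] at hy
      exact hy
    have hnum : a₂ ^ 2 * r₂ ^ 2 ≤ 1 + a₂ ^ 2 * dist x₂ y ^ 2 := by
      nlinarith [mul_le_mul hd2 hd2 hr₂0.le (le_trans hr₂0.le hd2),
        mul_nonneg (mul_nonneg ha₂ ha₂) (mul_nonneg hr₂0.le hr₂0.le)]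
    have hdist : dist x₁ y ≤ D :=
      dist_le_diam_of_mem isCompact_univ.isBounded (Set.mem_univ _) (Set.mem_univ _)
    have hden : (1 + a₁ ^ 2 * dist x₁ y ^ 2) ^ 2 ≤ (1 + A ^ 2 * D ^ 2) ^ 2 := by
      have h1 : a₁ ^ 2 * dist x₁ y ^ 2 ≤ A ^ 2 * D ^ 2 := by
        apply mul_le_mul (by nlinarith) (by nlinarith [dist_nonneg (x := x₁) (y := y)])
          (sq_nonneg _) (sq_nonneg _)
      nlinarith [sq_nonneg (a₁ * dist x₁ y)]
    rw [hcst]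
    exact div_le_div₀ (by positivity) hnum
      (by positivity) hden
  have hds : cst * (μ Bᶜ).toReal ≤
      ∫ y in Bᶜ, (1 + a₂ ^ 2 * dist x₂ y ^ 2) / (1 + a₁ ^ 2 * dist x₁ y ^ 2) ^ 2 ∂μ :=
    by have h := setIntegral_ge_of_const_le_real measurableSet_ball.compl (measure_ne_top μ _) hptwise
         ((cont_integrable μ (f_cont a₁ a₂ x₁ x₂)).integrableOn)
       exact h
  have hset : ∫ y in Bᶜ, (1 + a₂ ^ 2 * dist x₂ y ^ 2) / (1 + a₁ ^ 2 * dist x₁ y ^ 2) ^ 2 ∂μ ≤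
      ∫ y, (1 + a₂ ^ 2 * dist x₂ y ^ 2) / (1 + a₁ ^ 2 * dist x₁ y ^ 2) ^ 2 ∂μ := by
    apply setIntegral_le_integral (cont_integrable μ (f_cont a₁ a₂ x₁ x₂))
    apply ae_of_all
    intro y
    have h1 : (0:ℝ) < 1 + a₁ ^ 2 * dist x₁ y ^ 2 := by positivity
    positivity
  calc (a₂ ^ 2 * (1 / (2 * c₂)) / 2) / (1 + A ^ 2 * D ^ 2) ^ 2
      = cst * (1/2) := by rw [hcst, ← hr₂sq]; ring
    _ ≤ cst * (μ Bᶜ).toReal := mul_le_mul_of_nonneg_left hμBc hcst0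
    _ ≤ _ := le_trans hds hset

end IntHelpers

/-- Test-function integral estimates. On a compact metric probability space which is
Ahlfors 2-regular at small scales (as a compact surface of unit area), fix `δ > 0` small.
For parameters `((x₁,t₁),(x₂,t₂))` in the set `𝒳_ν` (i.e. `t_i ∈ (0,δ]`,
`min tᵢ ∈ [ν², ν]` with `ν ≪ δ`, and either `|t₁−t₂|² + d(x₁,x₂)² ≥ δ⁴` or `max tᵢ = δ`),
set `t̃ᵢ = 1/tᵢ` for `tᵢ ≤ δ/2` and `t̃ᵢ = −(4/δ²)(tᵢ−δ)` otherwise, and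
`φ₁(y) = log[(1 + t̃₂² d(x₂,y)²)/(1 + t̃₁² d(x₁,y)²)²]`. Then there exists
`C = C(δ, Σ) > 0` with `(1/C) t₁²/t₂² ≤ ∫_Σ e^{φ₁} ≤ C t₁²/t₂²`. -/
theorem stmt10 {S : Type*} [MetricSpace S] [CompactSpace S] [MeasurableSpace S]
    [BorelSpace S] (μ : Measure S) [IsProbabilityMeasure μ]
    (c₁ c₂ s₀ : ℝ) (hc₁ : 0 < c₁) (hc₂ : 0 < c₂) (hs₀ : 0 < s₀)
    (hvol_lower : ∀ (p : S) (s : ℝ), 0 < s → s ≤ s₀ →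
      ENNReal.ofReal (c₁ * s ^ 2) ≤ μ (ball p s))
    (hvol_upper : ∀ (p : S) (s : ℝ), 0 < s → μ (ball p s) ≤ ENNReal.ofReal (c₂ * s ^ 2))
    (δ : ℝ) (hδ : 0 < δ) (hδs : δ ≤ s₀) :
    ∃ ν₀ : ℝ, 0 < ν₀ ∧ ν₀ < δ ∧ ∃ C : ℝ, 0 < C ∧
      ∀ (x₁ x₂ : S) (t₁ t₂ : ℝ), 0 < t₁ → t₁ ≤ δ → 0 < t₂ → t₂ ≤ δ →
        ν₀ ^ 2 ≤ min t₁ t₂ → min t₁ t₂ ≤ ν₀ →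
        (δ ^ 4 ≤ |t₁ - t₂| ^ 2 + dist x₁ x₂ ^ 2 ∨ max t₁ t₂ = δ) →
        (1 / C) * (t₁ ^ 2 / t₂ ^ 2) ≤
            (∫ y, exp (log ((1 + (if t₂ ≤ δ / 2 then 1 / t₂ else -(4 / δ ^ 2) * (t₂ - δ)) ^ 2
                    * dist x₂ y ^ 2) /
                  (1 + (if t₁ ≤ δ / 2 then 1 / t₁ else -(4 / δ ^ 2) * (t₁ - δ)) ^ 2
                    * dist x₁ y ^ 2) ^ 2)) ∂μ) ∧
          (∫ y, exp (log ((1 + (if t₂ ≤ δ / 2 then 1 / t₂ else -(4 / δ ^ 2) * (t₂ - δ)) ^ 2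
                  * dist x₂ y ^ 2) /
                (1 + (if t₁ ≤ δ / 2 then 1 / t₁ else -(4 / δ ^ 2) * (t₁ - δ)) ^ 2
                  * dist x₁ y ^ 2) ^ 2)) ∂μ) ≤ C * (t₁ ^ 2 / t₂ ^ 2) := by
  -- basic constants
  have hδ₁ : 0 < min δ 1 := lt_min hδ one_pos
  have hδ₁1 : min δ 1 ≤ 1 := min_le_right _ _
  have hδ₁δ : min δ 1 ≤ δ := min_le_left _ _
  set δ₁ := min δ 1 with hδ₁def
  set T := δ₁^2/2 with hTdef
  have hT0 : 0 < T := by positivity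
  set A := 2/δ₁^2 with hAdef
  have hA0 : 0 < A := by positivity
  set s₁ := min s₀ (1/2) with hs₁def
  have hs₁0 : 0 < s₁ := lt_min hs₀ (by norm_num)
  have hs₁s : s₁ ≤ s₀ := min_le_left _ _
  have hs₁1 : s₁ ≤ 1 := le_trans (min_le_right _ _) (by norm_num)
  have hs₁half : s₁ ≤ 1/2 := min_le_right _ _
  set D := diam (Set.univ : Set S) with hDdef
  have hD0 : 0 ≤ D := diam_nonneg
  set K₀ := max 1 (2/δ) with hK₀def
  have hK₀1 : (1:ℝ) ≤ K₀ := le_max_left _ _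
  have hK₀0 : 0 < K₀ := lt_of_lt_of_le one_pos hK₀1
  set CU := (1 + D^2) * (4 + 36*c₂) with hCUdef
  have hCU0 : 0 < CU := by positivity
  set CL := min ((c₁*s₁^2/4) / (1+A)^2)
      (min ((1/(2*c₂)/2) / (1+A^2*D^2)^2 / 4) (c₁*s₁^2/4 * (T^2/4))) with hCLdef
  have hCL0 : 0 < CL := by
    apply lt_min (by positivity) (lt_min (by positivity) (by positivity))
  set K := K₀^2*(δ+2)^2 with hKdef
  have hK0 : 0 < K := by positivity
  refine ⟨δ/2, by positivity, by linarith, max (CU*K) (K/CL),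
    lt_of_lt_of_le (by positivity) (le_max_left _ _), ?_⟩
  intro x₁ x₂ t₁ t₂ ht₁ ht₁δ ht₂ ht₂δ hmin1 hmin2 hsep
  set a₂ := (if t₂ ≤ δ / 2 then 1 / t₂ else -(4 / δ ^ 2) * (t₂ - δ)) with ha₂def
  set a₁ := (if t₁ ≤ δ / 2 then 1 / t₁ else -(4 / δ ^ 2) * (t₁ - δ)) with ha₁def
  have ha₁0 : 0 ≤ a₁ := tilde_nonneg δ t₁ hδ ht₁ ht₁δ
  have ha₂0 : 0 ≤ a₂ := tilde_nonneg δ t₂ hδ ht₂ ht₂δ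
  have hP₁ : (0:ℝ) < 1 + a₁ := by linarith
  have hP₂ : (0:ℝ) < 1 + a₂ := by linarith
  -- rewrite exp ∘ log
  have hI : (∫ y, exp (log ((1 + a₂ ^ 2 * dist x₂ y ^ 2) /
        (1 + a₁ ^ 2 * dist x₁ y ^ 2) ^ 2)) ∂μ) =
      ∫ y, (1 + a₂ ^ 2 * dist x₂ y ^ 2) / (1 + a₁ ^ 2 * dist x₁ y ^ 2) ^ 2 ∂μ := by
    apply integral_congr_ae
    apply ae_of_all
    intro y
    apply Real.exp_log
    have h1 : (0:ℝ) < 1 + a₁ ^ 2 * dist x₁ y ^ 2 := by positivity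
    have h2 : (0:ℝ) < 1 + a₂ ^ 2 * dist x₂ y ^ 2 := by positivity
    positivity
  rw [hI]
  -- comparabilities
  have e1 : t₂*(1+a₂) ≤ δ+2 := by
    have h := tilde_lb δ t₂ hδ ht₂ ht₂δ
    rw [← ha₂def, div_le_div_iff₀ (by linarith) hP₂] at h
    linarith
  have e2 : 1 ≤ K₀*t₁*(1+a₁) := by
    have h := tilde_ub δ t₁ hδ ht₁ ht₁δ
    rw [← ha₁def, ← hK₀def, div_le_iff₀ hP₁] at h
    linarith
  have e3 : t₁*(1+a₁) ≤ δ+2 := by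
    have h := tilde_lb δ t₁ hδ ht₁ ht₁δ
    rw [← ha₁def, div_le_div_iff₀ (by linarith) hP₁] at h
    linarith
  have e4 : 1 ≤ K₀*t₂*(1+a₂) := by
    have h := tilde_ub δ t₂ hδ ht₂ ht₂δ
    rw [← ha₂def, ← hK₀def, div_le_iff₀ hP₂] at h
    linarith
  -- ratio bounds
  have hratio_ub : (1+a₂)^2/(1+a₁)^2 ≤ K * (t₁^2/t₂^2) := by
    rw [hKdef, show K₀^2*(δ+2)^2 * (t₁^2/t₂^2) = (K₀^2*(δ+2)^2*t₁^2)/t₂^2 from by ring,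
      div_le_div_iff₀ (by positivity) (by positivity)]
    have q1 : (t₂*(1+a₂))^2 ≤ (δ+2)^2 := pow_le_pow_left₀ (by positivity) e1 2
    have q2 : 1 ≤ (K₀*t₁*(1+a₁))^2 := by
      have := pow_le_pow_left₀ (by norm_num : (0:ℝ) ≤ 1) e2 2
      simpa using this
    calc (1+a₂)^2 * t₂^2 = (t₂*(1+a₂))^2 := by ring
      _ ≤ (δ+2)^2 := q1
      _ = (δ+2)^2 * 1 := (mul_one _).symm
      _ ≤ (δ+2)^2 * (K₀*t₁*(1+a₁))^2 := mul_le_mul_of_nonneg_left q2 (by positivity)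
      _ = (K₀^2*(δ+2)^2*t₁^2) * (1+a₁)^2 := by ring
  have hratio_lb : (1/K) * (t₁^2/t₂^2) ≤ (1+a₂)^2/(1+a₁)^2 := by
    rw [hKdef, show (1/(K₀^2*(δ+2)^2)) * (t₁^2/t₂^2) = t₁^2/(K₀^2*(δ+2)^2*t₂^2) from by
        field_simp, div_le_div_iff₀ (by positivity) (by positivity)]
    have q3 : (t₁*(1+a₁))^2 ≤ (δ+2)^2 := pow_le_pow_left₀ (by positivity) e3 2
    have q4 : 1 ≤ (K₀*t₂*(1+a₂))^2 := by
      have := pow_le_pow_left₀ (by norm_num : (0:ℝ) ≤ 1) e4 2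
      simpa using this
    calc t₁^2 * (1+a₁)^2 = (t₁*(1+a₁))^2 := by ring
      _ ≤ (δ+2)^2 := q3
      _ = (δ+2)^2 * 1 := (mul_one _).symm
      _ ≤ (δ+2)^2 * (K₀*t₂*(1+a₂))^2 := mul_le_mul_of_nonneg_left q4 (by positivity)
      _ = (1+a₂)^2 * (K₀^2*(δ+2)^2*t₂^2) := by ring
  -- master upper bound
  have hUP : (∫ y, (1 + a₂ ^ 2 * dist x₂ y ^ 2) / (1 + a₁ ^ 2 * dist x₁ y ^ 2) ^ 2 ∂μ) ≤
      CU * ((1+a₂)^2/(1+a₁)^2) :=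
    upper_main μ c₂ hc₂ hvol_upper x₁ x₂ a₁ a₂ ha₁0 ha₂0
  -- master lower bound
  have hLOW : CL * ((1+a₂)^2/(1+a₁)^2) ≤
      ∫ y, (1 + a₂ ^ 2 * dist x₂ y ^ 2) / (1 + a₁ ^ 2 * dist x₁ y ^ 2) ^ 2 ∂μ := by
    have hrat0 : (0:ℝ) ≤ (1+a₂)^2/(1+a₁)^2 := by positivity
    rcases le_or_gt T t₂ with h2 | h2
    · -- t₂ not too small : use plain ball bound
      have hA₂ : a₂ ≤ A := tilde_le_A δ t₂ hδ ht₂ ht₂δ h2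
      have hb := lower_ball μ c₁ hc₁ s₀ hs₀ hvol_lower x₁ x₂ a₁ a₂ 0 s₁ ha₁0 ha₂0 le_rfl
        hs₁0 hs₁s hs₁1 (fun y _ => dist_nonneg)
      calc CL * ((1+a₂)^2/(1+a₁)^2)
          ≤ ((c₁*s₁^2/4) / (1+A)^2) * ((1+a₂)^2/(1+a₁)^2) :=
            mul_le_mul_of_nonneg_right (min_le_left _ _) hrat0
        _ = (c₁*s₁^2/4) * ((1+a₂)^2/(1+A)^2) * (1/(1+a₁)^2) := by ring
        _ ≤ (c₁*s₁^2/4) * 1 * (1/(1+a₁)^2) := by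
            apply mul_le_mul_of_nonneg_right _ (by positivity)
            apply mul_le_mul_of_nonneg_left _ (by positivity)
            rw [div_le_one (by positivity)]
            have h12 : (1+a₂) ≤ (1+A) := by linarith
            exact pow_le_pow_left₀ (by positivity) h12 2
        _ = (c₁*s₁^2/4) * (1 + a₂^2*0^2) * (1/(1+a₁)^2) := by norm_num
        _ ≤ _ := hb
    · obtain ⟨ht₂half, ht₂2⟩ := tilde_of_small δ t₂ hδ ht₂ ht₂δ h2
      have ha₂eq : a₂ = 1/t₂ := by rw [ha₂def, if_pos ht₂half]
      have ha₂2 : 2 ≤ a₂ := by rw [ha₂eq]; exact ht₂2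
      have hsq : (1+a₂)^2 ≤ 4*a₂^2 := by
        have h12 : 1+a₂ ≤ 2*a₂ := by linarith
        calc (1+a₂)^2 ≤ (2*a₂)^2 := pow_le_pow_left₀ (by linarith) h12 2
          _ = 4*a₂^2 := by ring
      rcases le_or_gt T t₁ with h1 | h1
      · -- t₁ not too small : complement bound
        have hA₁ : a₁ ≤ A := tilde_le_A δ t₁ hδ ht₁ ht₁δ h1
        have hb := lower_compl μ c₂ hc₂ hvol_upper x₁ x₂ a₁ a₂ A ha₁0 ha₂0 hA₁
        have hrat2 : (1+a₂)^2/(1+a₁)^2 ≤ 4*a₂^2 := by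
          rw [div_le_iff₀ (by positivity)]
          have hone : (1:ℝ) ≤ (1+a₁)^2 := by
            have := pow_le_pow_left₀ (by norm_num : (0:ℝ) ≤ 1)
              (by linarith : (1:ℝ) ≤ 1+a₁) 2
            simpa using this
          calc (1+a₂)^2 ≤ 4*a₂^2 := hsq
            _ = 4*a₂^2 * 1 := (mul_one _).symm
            _ ≤ 4*a₂^2 * (1+a₁)^2 := by
                apply mul_le_mul_of_nonneg_left hone (by positivity)
        calc CL * ((1+a₂)^2/(1+a₁)^2)
            ≤ ((1/(2*c₂)/2) / (1+A^2*D^2)^2 / 4) * ((1+a₂)^2/(1+a₁)^2) :=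
              mul_le_mul_of_nonneg_right (le_trans (min_le_right _ _) (min_le_left _ _)) hrat0
          _ ≤ ((1/(2*c₂)/2) / (1+A^2*D^2)^2 / 4) * (4*a₂^2) :=
              mul_le_mul_of_nonneg_left hrat2 (by positivity)
          _ = (a₂^2 * (1/(2*c₂)) / 2) / (1+A^2*D^2)^2 := by ring
          _ ≤ _ := hb
      · -- both small : spatial separation
        obtain ⟨ht₁half, ht₁2⟩ := tilde_of_small δ t₁ hδ ht₁ ht₁δ h1
        have ha₁eq : a₁ = 1/t₁ := by rw [ha₁def, if_pos ht₁half]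
        have hδ₁sq : δ₁^2 ≤ δ := by
          have h := mul_le_mul hδ₁δ hδ₁1 hδ₁.le hδ.le
          calc δ₁^2 = δ₁*δ₁ := _root_.sq δ₁ ▸ (pow_two δ₁)
            _ ≤ δ*1 := h
            _ = δ := mul_one δ
        have hTδ2 : T ≤ δ/2 := by rw [hTdef]; linarith
        have hsep' : δ^4 ≤ |t₁ - t₂|^2 + dist x₁ x₂^2 := by
          rcases hsep with h | h
          · exact h
          · exfalso
            rcases max_choice t₁ t₂ with hm | hm <;> rw [hm] at h <;> linarith
        have habs : |t₁ - t₂| < T := by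
          rw [abs_sub_lt_iff]; constructor <;> linarith
        have hδ₁4 : δ₁^4 ≤ δ^4 := by
          apply pow_le_pow_left₀ hδ₁.le hδ₁δ
        have habs2 : |t₁-t₂|^2 ≤ T^2 := pow_le_pow_left₀ (abs_nonneg _) habs.le 2
        have hT2 : T^2 = δ₁^4/4 := by rw [hTdef]; ring
        have hdist2 : (3/4)*δ₁^4 ≤ dist x₁ x₂^2 := by
          linarith [hsep', habs2, hδ₁4]
        have hdist : (3/2)*T ≤ dist x₁ x₂ := by
          by_contra hcon
          push_neg at hcon
          have hss := mul_self_lt_mul_self dist_nonneg hcon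
          have hs2 : dist x₁ x₂^2 < ((3/2)*T)^2 := by
            rw [sq, sq]; exact hss
          have hexp : ((3/2)*T)^2 = (9/16)*δ₁^4 := by
            rw [mul_pow, hT2]; ring
          have hδ₁4pos : (0:ℝ) < δ₁^4 := by positivity
          linarith
        have hd : ∀ y ∈ ball x₁ (s₁/(1+a₁)), T ≤ dist x₂ y := by
          intro y hy
          have h3 : dist y x₁ < s₁/(1+a₁) := mem_ball.1 hy
          have h4 : s₁/(1+a₁) ≤ T/2 := by
            have hinv : 1/(1+a₁) ≤ t₁ := by
              rw [div_le_iff₀ hP₁, ha₁eq]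
              rw [one_div t₁, mul_add, mul_inv_cancel₀ ht₁.ne']
              linarith
            calc s₁/(1+a₁) = s₁ * (1/(1+a₁)) := by ring
              _ ≤ (1/2) * t₁ := by
                  apply mul_le_mul hs₁half hinv (by positivity) (by norm_num)
              _ ≤ T/2 := by linarith
          have h5 := dist_triangle x₂ y x₁
          have h6 := dist_triangle x₂ x₁ y
          have h7 : dist x₂ x₁ = dist x₁ x₂ := dist_comm _ _
          have h8 : dist y x₁ = dist x₁ y := dist_comm _ _
          linarith
        have hb := lower_ball μ c₁ hc₁ s₀ hs₀ hvol_lower x₁ x₂ a₁ a₂ T s₁ ha₁0 ha₂0 hT0.le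
          hs₁0 hs₁s hs₁1 hd
        calc CL * ((1+a₂)^2/(1+a₁)^2)
            ≤ (c₁*s₁^2/4 * (T^2/4)) * ((1+a₂)^2/(1+a₁)^2) :=
              mul_le_mul_of_nonneg_right (le_trans (min_le_right _ _) (min_le_right _ _)) hrat0
          _ = (c₁*s₁^2/4) * ((T^2/4) * (1+a₂)^2) * (1/(1+a₁)^2) := by ring
          _ ≤ (c₁*s₁^2/4) * (1 + a₂^2*T^2) * (1/(1+a₁)^2) := by
              apply mul_le_mul_of_nonneg_right _ (by positivity)
              apply mul_le_mul_of_nonneg_left _ (by positivity)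
              calc T^2/4 * (1+a₂)^2 ≤ T^2/4 * (4*a₂^2) :=
                    mul_le_mul_of_nonneg_left hsq (by positivity)
                _ = a₂^2*T^2 := by ring
                _ ≤ 1 + a₂^2*T^2 := by linarith [sq_nonneg (a₂*T)]
          _ ≤ _ := hb
  constructor
  · -- lower bound
    have hC1 : 1 / max (CU*K) (K/CL) ≤ CL/K := by
      have h1 : K/CL ≤ max (CU*K) (K/CL) := le_max_right _ _
      have h2 : (0:ℝ) < K/CL := by positivity
      calc 1 / max (CU*K) (K/CL) ≤ 1/(K/CL) := by
            apply one_div_le_one_div_of_le h2 h1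
        _ = CL/K := by rw [one_div_div]
    calc (1 / max (CU*K) (K/CL)) * (t₁^2/t₂^2) ≤ (CL/K) * (t₁^2/t₂^2) :=
          mul_le_mul_of_nonneg_right hC1 (by positivity)
      _ = CL * ((1/K) * (t₁^2/t₂^2)) := by ring
      _ ≤ CL * ((1+a₂)^2/(1+a₁)^2) := mul_le_mul_of_nonneg_left hratio_lb hCL0.le
      _ ≤ _ := hLOW
  · -- upper bound
    calc (∫ y, (1 + a₂ ^ 2 * dist x₂ y ^ 2) / (1 + a₁ ^ 2 * dist x₁ y ^ 2) ^ 2 ∂μ)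
        ≤ CU * ((1+a₂)^2/(1+a₁)^2) := hUP
      _ ≤ CU * (K * (t₁^2/t₂^2)) := mul_le_mul_of_nonneg_left hratio_ub hCU0.le
      _ = (CU*K) * (t₁^2/t₂^2) := by ring
      _ ≤ max (CU*K) (K/CL) * (t₁^2/t₂^2) :=
          mul_le_mul_of_nonneg_right (le_max_left _ _) (by positivity)
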